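/- arXiv:2210.13459 — 2 statements merged into one kernel-verified Lean document; each statement's English description precedes it below -/
import Mathlib

section
/- The sum over non-target indices of the cross-entropy gradients equals 1 - P_θ(y_j), and hence (∑_{i≠j} ∂L_kd/∂z_i)/(∑_{i≠j} ∂L_ce/∂z_i) = (1-α) + α·(P_θ(y_j) - P_φ(y_j))/(P_θ(y_j) - 1), assuming P_θ(y_j) < 1. -/
/-- The sum of CE gradients over non-target indices equals `1 - P_θ(y_j)`,
and the ratio of the summed KD gradients to the summed CE gradients equals
`(1-α) + α(P_θ(y_j) - P_φ(y_j))/(P_θ(y_j) - 1)` when `P_θ(y_j) < 1`. -/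
theorem stmt_8 (C : ℕ) (Pθ Pφ : Fin C → ℝ)
    (hPθ : ∑ i, Pθ i = 1) (hPφ : ∑ i, Pφ i = 1)
    (j : Fin C) (α : ℝ) (hα0 : 0 ≤ α) (hα1 : α ≤ 1) (hj : Pθ j < 1) :
    ∑ i ∈ Finset.univ.erase j, Pθ i = 1 - Pθ j ∧
      (∑ i ∈ Finset.univ.erase j, ((1 - α) * Pθ i + α * (Pθ i - Pφ i)))
          / (∑ i ∈ Finset.univ.erase j, Pθ i)
        = (1 - α) + α * (Pθ j - Pφ j) / (Pθ j - 1) := by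
  have h1 : ∑ i ∈ Finset.univ.erase j, Pθ i = 1 - Pθ j := by
    rw [Finset.sum_erase_eq_sub (Finset.mem_univ j), hPθ]
  have h2 : ∑ i ∈ Finset.univ.erase j, Pφ i = 1 - Pφ j := by
    rw [Finset.sum_erase_eq_sub (Finset.mem_univ j), hPφ]
  refine ⟨h1, ?_⟩
  rw [Finset.sum_add_distrib, ← Finset.mul_sum, ← Finset.mul_sum,
    Finset.sum_sub_distrib, h1, h2]
  have hne : Pθ j - 1 ≠ 0 := by linarith
  have hne' : (1 : ℝ) - Pθ j ≠ 0 := by linarith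
  field_simp
  ring
end

section
/- The gradient rescaling factor at the target index equals the ratio of summed gradients over all non-target indices: (1-α) + α·(P_θ(y_j) - P_φ(y_j))/(P_θ(y_j)-1) = (∑_{i≠j} ∂L_kd/∂z_i)/(∑_{i≠j} ∂L_ce/∂z_i). -/
/-- The gradient rescaling factor at the target index equals the ratio of
summed gradients over all non-target indices. -/
theorem stmt_9 (C : ℕ) (Pθ Pφ : Fin C → ℝ)
    (hPθ : ∑ i, Pθ i = 1) (hPφ : ∑ i, Pφ i = 1)
    (j : Fin C) (hj : Pθ j < 1) (α : ℝ) (hα0 : 0 ≤ α) (hα1 : α ≤ 1)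
    (y : Fin C → ℝ) (hy : ∀ k, y k = if k = j then 1 else 0) :
    (1 - α) + α * (Pθ j - Pφ j) / (Pθ j - 1)
      = (∑ i ∈ Finset.univ.erase j,
            ((1 - α) * (Pθ i - y i) + α * (Pθ i - Pφ i)))
        / (∑ i ∈ Finset.univ.erase j, (Pθ i - y i)) := by
  have hθ : ∑ i ∈ Finset.univ.erase j, Pθ i = 1 - Pθ j := by
    have := Finset.add_sum_erase Finset.univ Pθ (Finset.mem_univ j)
    rw [hPθ] at this; linarith
  have hφ : ∑ i ∈ Finset.univ.erase j, Pφ i = 1 - Pφ j := by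
    have := Finset.add_sum_erase Finset.univ Pφ (Finset.mem_univ j)
    rw [hPφ] at this; linarith
  have hyz : ∑ i ∈ Finset.univ.erase j, y i = 0 := by
    apply Finset.sum_eq_zero
    intro i hi
    rw [hy i, if_neg (Finset.ne_of_mem_erase hi)]
  have hden : ∑ i ∈ Finset.univ.erase j, (Pθ i - y i) = 1 - Pθ j := by
    rw [Finset.sum_sub_distrib, hθ, hyz]; ring
  have hnum : ∑ i ∈ Finset.univ.erase j,
      ((1 - α) * (Pθ i - y i) + α * (Pθ i - Pφ i)) =
      (1 - α) * (1 - Pθ j) + α * (Pφ j - Pθ j) := by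
    rw [Finset.sum_add_distrib, ← Finset.mul_sum, ← Finset.mul_sum, hden,
      Finset.sum_sub_distrib, hθ, hφ]; ring
  rw [hnum, hden]
  have h1 : Pθ j - 1 ≠ 0 := by linarith
  have h2 : 1 - Pθ j ≠ 0 := by linarith
  field_simp
  ring
end
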